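/- For p, q, k > 1 and r, s ∈ (0,1) with r ≥ s, one has (arcsin_{p,q}(s)/arcsin_{p,q}(r))^k ≤ arcsin_{p,q}(s^k)/arcsin_{p,q}(r^k). -/

import Mathlib

open Real Set intervalIntegral MeasureTheory

noncomputable def arcsinpq (p q x : ℝ) : ℝ :=
  ∫ t in (0:ℝ)..x, (1 - t ^ q) ^ (-1/p)

section aux

variable {p q : ℝ}

private lemma base_pos (hq : 0 < q) {t : ℝ} (ht : t ∈ Ioo (-1:ℝ) 1) :
    0 < 1 - t ^ q := by
  have h1 : t ^ q ≤ |t ^ q| := le_abs_self _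
  have h2 : |t ^ q| ≤ |t| ^ q := Real.abs_rpow_le_abs_rpow t q
  have h3 : |t| ^ q < 1 := Real.rpow_lt_one (abs_nonneg t) (abs_lt.mpr ⟨ht.1, ht.2⟩) hq
  linarith

private lemma f_contAt (hq : 0 < q) {t : ℝ} (ht : t ∈ Ioo (-1:ℝ) 1) :
    ContinuousAt (fun t : ℝ => (1 - t ^ q) ^ (-1/p)) t := by
  have h1 : ContinuousAt (fun t : ℝ => 1 - t ^ q) t :=
    continuousAt_const.sub (Real.continuousAt_rpow_const t q (Or.inr hq.le))
  exact h1.rpow_const (Or.inl (base_pos hq ht).ne')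

private lemma f_pos (hp : 1 < p) (hq : 0 < q) {t : ℝ} (ht : t ∈ Ioo (-1:ℝ) 1) :
    0 < (1 - t ^ q) ^ (-1/p) :=
  Real.rpow_pos_of_pos (base_pos hq ht) _

end aux

section aux2

variable {p q : ℝ}

private lemma f_intOn (hq : 0 < q) {x : ℝ} (hx0 : 0 ≤ x) (hx1 : x < 1) :
    IntervalIntegrable (fun t : ℝ => (1 - t ^ q) ^ (-1/p)) volume 0 x := by
  apply ContinuousOn.intervalIntegrable
  intro t ht
  rw [uIcc_of_le hx0] at ht
  exact (f_contAt hq ⟨by linarith [ht.1], lt_of_le_of_lt ht.2 hx1⟩).continuousWithinAt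

private lemma F_pos (hp : 1 < p) (hq : 0 < q) {x : ℝ} (hx : x ∈ Ioo (0:ℝ) 1) :
    0 < arcsinpq p q x := by
  apply intervalIntegral_pos_of_pos_on (f_intOn hq hx.1.le hx.2)
  · intro t ht
    exact f_pos hp hq ⟨by linarith [ht.1], lt_trans ht.2 hx.2⟩
  · exact hx.1

private lemma F_hasDeriv (hq : 0 < q) {x : ℝ} (hx : x ∈ Ioo (0:ℝ) 1) :
    HasDerivAt (arcsinpq p q) ((1 - x ^ q) ^ (-1/p)) x := by
  apply integral_hasDerivAt_right (f_intOn hq hx.1.le hx.2)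
  · exact ContinuousOn.stronglyMeasurableAtFilter isOpen_Ioo
      (fun t ht => (f_contAt hq ht).continuousWithinAt) x ⟨by linarith [hx.1], hx.2⟩
  · exact f_contAt hq ⟨by linarith [hx.1], hx.2⟩

end aux2

section aux3

variable {p q : ℝ}

private lemma pointwise (hp : 1 < p) (hq : 0 < q) {c t x : ℝ}
    (hc : 0 < c) (hc1 : c ≤ 1) (ht : 0 ≤ t) (htx : t ≤ x) (hx1 : x < 1) :
    (1 - (c*x) ^ q) ^ (-1/p) * (1 - t ^ q) ^ (-1/p)
      ≤ (1 - (c*t) ^ q) ^ (-1/p) * (1 - x ^ q) ^ (-1/p) := by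
  have hx0 : 0 ≤ x := le_trans ht htx
  have hct : c * t ∈ Ioo (-1:ℝ) 1 := by
    constructor
    · nlinarith
    · nlinarith
  have hcx : c * x ∈ Ioo (-1:ℝ) 1 := by
    constructor
    · nlinarith
    · nlinarith
  have htm : t ∈ Ioo (-1:ℝ) 1 := ⟨by linarith, lt_of_le_of_lt htx hx1⟩
  have hxm : x ∈ Ioo (-1:ℝ) 1 := ⟨by linarith, hx1⟩
  have h1 := base_pos hq hct
  have h2 := base_pos hq hcx
  have h3 := base_pos hq htm
  have h4 := base_pos hq hxm
  rw [← Real.mul_rpow h2.le h3.le, ← Real.mul_rpow h1.le h4.le]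
  apply Real.rpow_le_rpow_of_nonpos
  · positivity
  · have e1 : (c*t) ^ q = c ^ q * t ^ q := Real.mul_rpow hc.le ht
    have e2 : (c*x) ^ q = c ^ q * x ^ q := Real.mul_rpow hc.le hx0
    have i1 : c ^ q ≤ 1 := Real.rpow_le_one hc.le hc1 hq.le
    have i2 : t ^ q ≤ x ^ q := Real.rpow_le_rpow ht htx hq.le
    rw [e1, e2]
    nlinarith [mul_nonneg (sub_nonneg.mpr i1) (sub_nonneg.mpr i2)]
  · rw [neg_div]
    exact neg_nonpos.mpr (by positivity)

private lemma star (hp : 1 < p) (hq : 0 < q) {c x : ℝ} (hx : x ∈ Ioo (0:ℝ) 1)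
    (hc : 0 < c) (hc1 : c ≤ 1) :
    c * ((1 - (c*x) ^ q) ^ (-1/p)) * arcsinpq p q x
      ≤ (1 - x ^ q) ^ (-1/p) * arcsinpq p q (c * x) := by
  have hsub : arcsinpq p q (c * x)
      = c * ∫ t in (0:ℝ)..x, (1 - (c*t) ^ q) ^ (-1/p) := by
    have h := smul_integral_comp_mul_left (a := 0) (b := x)
      (fun t => (1 - t ^ q) ^ (-1/p)) c
    simp only [mul_zero] at h
    rw [arcsinpq, ← h, smul_eq_mul]
  have hint1 : IntervalIntegrable (fun t : ℝ => (1 - (c*x) ^ q) ^ (-1/p) * (1 - t ^ q) ^ (-1/p))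
      volume 0 x := (f_intOn hq hx.1.le hx.2).const_mul _
  have hint2 : IntervalIntegrable (fun t : ℝ => (1 - (c*t) ^ q) ^ (-1/p) * (1 - x ^ q) ^ (-1/p))
      volume 0 x := by
    apply ContinuousOn.intervalIntegrable
    intro t ht
    rw [uIcc_of_le hx.1.le] at ht
    have hm : c * t ∈ Ioo (-1:ℝ) 1 := by
      constructor
      · nlinarith [ht.1, ht.2, hx.2]
      · nlinarith [ht.1, ht.2, hx.2]
    exact (((f_contAt hq hm).comp (by fun_prop : ContinuousAt (fun t : ℝ => c * t) t)).mul
      continuousAt_const).continuousWithinAt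
  have hmono : (∫ t in (0:ℝ)..x, (1 - (c*x) ^ q) ^ (-1/p) * (1 - t ^ q) ^ (-1/p))
      ≤ ∫ t in (0:ℝ)..x, (1 - (c*t) ^ q) ^ (-1/p) * (1 - x ^ q) ^ (-1/p) := by
    apply integral_mono_on hx.1.le hint1 hint2
    intro t ht
    exact pointwise hp hq hc hc1 ht.1 ht.2 hx.2
  rw [hsub]
  rw [intervalIntegral.integral_const_mul] at hmono
  rw [intervalIntegral.integral_mul_const] at hmono
  calc c * ((1 - (c*x) ^ q) ^ (-1/p)) * arcsinpq p q x
      = c * ((1 - (c*x) ^ q) ^ (-1/p) * arcsinpq p q x) := by ring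
    _ ≤ c * ((∫ t in (0:ℝ)..x, (1 - (c*t) ^ q) ^ (-1/p)) * (1 - x ^ q) ^ (-1/p)) := by
        exact mul_le_mul_of_nonneg_left hmono hc.le
    _ = (1 - x ^ q) ^ (-1/p) * (c * ∫ t in (0:ℝ)..x, (1 - (c*t) ^ q) ^ (-1/p)) := by ring

end aux3

section main

variable {p q k : ℝ}

private lemma phi_hasDeriv (hp : 1 < p) (hq : 0 < q) (hk : 1 < k) {x : ℝ}
    (hx : x ∈ Ioo (0:ℝ) 1) :
    HasDerivAt (fun y => Real.log (arcsinpq p q (y ^ k)) - k * Real.log (arcsinpq p q y))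
      ((1 - (x ^ k) ^ q) ^ (-1/p) * (k * x ^ (k-1)) / arcsinpq p q (x ^ k)
        - k * ((1 - x ^ q) ^ (-1/p) / arcsinpq p q x)) x := by
  have hxk : x ^ k ∈ Ioo (0:ℝ) 1 :=
    ⟨Real.rpow_pos_of_pos hx.1 k, Real.rpow_lt_one hx.1.le hx.2 (by linarith)⟩
  have h1 : HasDerivAt (arcsinpq p q) ((1 - (x ^ k) ^ q) ^ (-1/p)) (x ^ k) :=
    F_hasDeriv hq hxk
  have h2 : HasDerivAt (fun y : ℝ => y ^ k) (k * x ^ (k-1)) x :=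
    Real.hasDerivAt_rpow_const (Or.inl hx.1.ne')
  have h3 : HasDerivAt (fun y => arcsinpq p q (y ^ k))
      ((1 - (x ^ k) ^ q) ^ (-1/p) * (k * x ^ (k-1))) x := h1.comp (h := fun y : ℝ => y ^ k) x h2
  have h4 := h3.log (F_pos hp hq hxk).ne'
  have h5 := ((F_hasDeriv (p := p) hq hx).log (F_pos hp hq hx).ne').const_mul k
  exact h4.sub h5

private lemma phi_deriv_nonpos (hp : 1 < p) (hq : 0 < q) (hk : 1 < k) {x : ℝ}
    (hx : x ∈ Ioo (0:ℝ) 1) :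
    (1 - (x ^ k) ^ q) ^ (-1/p) * (k * x ^ (k-1)) / arcsinpq p q (x ^ k)
      - k * ((1 - x ^ q) ^ (-1/p) / arcsinpq p q x) ≤ 0 := by
  have hxk : x ^ k ∈ Ioo (0:ℝ) 1 :=
    ⟨Real.rpow_pos_of_pos hx.1 k, Real.rpow_lt_one hx.1.le hx.2 (by linarith)⟩
  have hc : 0 < x ^ (k-1) := Real.rpow_pos_of_pos hx.1 _
  have hc1 : x ^ (k-1) ≤ 1 := Real.rpow_le_one hx.1.le hx.2.le (by linarith)
  have hcx : x ^ (k-1) * x = x ^ k := by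
    rw [← Real.rpow_add_one hx.1.ne' (k-1), sub_add_cancel]
  have hstar := star hp hq hx hc hc1
  rw [hcx] at hstar
  have hF := F_pos hp hq hx
  have hFk := F_pos hp hq hxk
  rw [sub_nonpos, show k * ((1 - x ^ q) ^ (-1/p) / arcsinpq p q x)
      = k * (1 - x ^ q) ^ (-1/p) / arcsinpq p q x from by ring,
    div_le_div_iff₀ hFk hF]
  have hk0 : (0:ℝ) < k := by linarith
  calc (1 - (x ^ k) ^ q) ^ (-1/p) * (k * x ^ (k-1)) * arcsinpq p q x
      = k * (x ^ (k-1) * (1 - (x ^ k) ^ q) ^ (-1/p) * arcsinpq p q x) := by ring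
    _ ≤ k * ((1 - x ^ q) ^ (-1/p) * arcsinpq p q (x ^ k)) :=
        mul_le_mul_of_nonneg_left hstar hk0.le
    _ = k * (1 - x ^ q) ^ (-1/p) * arcsinpq p q (x ^ k) := by ring

end main

theorem stmt13 (p q k r s : ℝ) (hp : 1 < p) (hq : 1 < q) (hk : 1 < k)
    (hr : r ∈ Ioo (0:ℝ) 1) (hs : s ∈ Ioo (0:ℝ) 1) (hrs : s ≤ r) :
    (arcsinpq p q s / arcsinpq p q r) ^ k ≤ arcsinpq p q (s ^ k) / arcsinpq p q (r ^ k) := by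
  have hq0 : (0:ℝ) < q := by linarith
  set φ : ℝ → ℝ := fun y => Real.log (arcsinpq p q (y ^ k)) - k * Real.log (arcsinpq p q y)
    with hφ
  have hsub : Icc s r ⊆ Ioo (0:ℝ) 1 := fun x hx => ⟨lt_of_lt_of_le hs.1 hx.1,
    lt_of_le_of_lt hx.2 hr.2⟩
  have hanti : AntitoneOn φ (Icc s r) := by
    apply antitoneOn_of_deriv_nonpos (convex_Icc s r)
    · intro x hx
      exact (phi_hasDeriv hp hq0 hk (hsub hx)).continuousAt.continuousWithinAt
    · intro x hx
      rw [interior_Icc] at hx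
      exact (phi_hasDeriv hp hq0 hk (hsub (Ioo_subset_Icc_self hx))).differentiableAt.differentiableWithinAt
    · intro x hx
      rw [interior_Icc] at hx
      have h := phi_hasDeriv hp hq0 hk (hsub (Ioo_subset_Icc_self hx))
      rw [h.deriv]
      exact phi_deriv_nonpos hp hq0 hk (hsub (Ioo_subset_Icc_self hx))
  have key : φ r ≤ φ s := hanti ⟨le_refl s, hrs⟩ ⟨hrs, le_refl r⟩ hrs
  have hsk : s ^ k ∈ Ioo (0:ℝ) 1 :=
    ⟨Real.rpow_pos_of_pos hs.1 k, Real.rpow_lt_one hs.1.le hs.2 (by linarith)⟩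
  have hrk : r ^ k ∈ Ioo (0:ℝ) 1 :=
    ⟨Real.rpow_pos_of_pos hr.1 k, Real.rpow_lt_one hr.1.le hr.2 (by linarith)⟩
  have hA := F_pos hp hq0 hsk
  have hB := F_pos hp hq0 hrk
  have ha := F_pos hp hq0 hs
  have hb := F_pos hp hq0 hr
  have key2 : Real.log (arcsinpq p q (r ^ k) * arcsinpq p q s ^ k)
      ≤ Real.log (arcsinpq p q (s ^ k) * arcsinpq p q r ^ k) := by
    rw [Real.log_mul hB.ne' (Real.rpow_pos_of_pos ha k).ne',
      Real.log_mul hA.ne' (Real.rpow_pos_of_pos hb k).ne',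
      Real.log_rpow ha, Real.log_rpow hb]
    simp only [hφ] at key
    linarith
  have key3 : arcsinpq p q (r ^ k) * arcsinpq p q s ^ k
      ≤ arcsinpq p q (s ^ k) * arcsinpq p q r ^ k :=
    (Real.log_le_log_iff (by positivity) (by positivity)).mp key2
  rw [Real.div_rpow ha.le hb.le, div_le_div_iff₀ (by positivity) hB]
  linarith
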